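/- Let (X,d,μ) be a space of homogeneous type with μ(X) = ∞ and p ∈ (ω/(ω+η),1]. If f ∈ H^p_cw(X) ∩ L²(X) (in particular any finite linear combination of (p,∞)-atoms, each with vanishing integral), then ∫_X f(x) dμ(x) = 0. Consequently, any test function f ∈ G(β,γ) with ∫ f dμ ≠ 0 belongs to h^p(X) but not to H^p_cw(X), so H^p_cw(X) ⊊ h^p(X). -/

import Mathlib

open MeasureTheory ENNReal Filter

/-- The quasi-metric ball `B(x,r) := {y : d(x,y) < r}`. -/
def qball {X : Type*} (d : X → X → ℝ) (x : X) (r : ℝ) : Set X := {y | d x y < r}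

/-- A Coifman–Weiss `(p,∞)`-atom: supported in a ball `B`, `‖a‖_{L^∞} ≤ μ(B)^{-1/p}`,
and vanishing integral. -/
def IsCWAtomInf {X : Type*} [MeasurableSpace X] (d : X → X → ℝ) (μ : Measure X)
    (p : ℝ) (a : X → ℝ) : Prop :=
  Integrable a μ ∧ ∃ (x₀ : X) (r₀ : ℝ), 0 < r₀ ∧
    Function.support a ⊆ qball d x₀ r₀ ∧
    (∀ x, |a x| ≤ (μ (qball d x₀ r₀)).toReal ^ (-(1 / p))) ∧
    ∫ x, a x ∂μ = 0

/-- A local `(p,∞)`-atom: supported in a ball `B(x₀,r₀)`,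
`‖a‖_{L^∞} ≤ μ(B)^{-1/p}`, and vanishing integral required only when `r₀ ≤ 1`. -/
def IsLocalAtomInf {X : Type*} [MeasurableSpace X] (d : X → X → ℝ) (μ : Measure X)
    (p : ℝ) (a : X → ℝ) : Prop :=
  Integrable a μ ∧ ∃ (x₀ : X) (r₀ : ℝ), 0 < r₀ ∧
    Function.support a ⊆ qball d x₀ r₀ ∧
    (∀ x, |a x| ≤ (μ (qball d x₀ r₀)).toReal ^ (-(1 / p))) ∧
    (r₀ ≤ 1 → ∫ x, a x ∂μ = 0)

/-- `f ∈ H^p_cw(X)`: `f` has an atomic decomposition `f = Σ_j λ_j a_j` into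
Coifman–Weiss `(p,∞)`-atoms with `Σ_j |λ_j|^p < ∞`, converging in `L¹(X)`. -/
def InHcw {X : Type*} [MeasurableSpace X] (d : X → X → ℝ) (μ : Measure X)
    (p : ℝ) (f : X → ℝ) : Prop :=
  ∃ (lam : ℕ → ℝ) (a : ℕ → X → ℝ),
    (∀ j, IsCWAtomInf d μ p (a j)) ∧ (Summable fun j => |lam j| ^ p) ∧
    Tendsto (fun n => ∫ x, |f x - ∑ j ∈ Finset.range n, lam j * a j x| ∂μ)
      atTop (nhds 0)

/-- `f ∈ h^p(X)`: `f` has an atomic decomposition `f = Σ_j λ_j a_j` into local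
`(p,∞)`-atoms with `Σ_j |λ_j|^p < ∞`, converging in `L¹(X)`. -/
def Inhp {X : Type*} [MeasurableSpace X] (d : X → X → ℝ) (μ : Measure X)
    (p : ℝ) (f : X → ℝ) : Prop :=
  ∃ (lam : ℕ → ℝ) (a : ℕ → X → ℝ),
    (∀ j, IsLocalAtomInf d μ p (a j)) ∧ (Summable fun j => |lam j| ^ p) ∧
    Tendsto (fun n => ∫ x, |f x - ∑ j ∈ Finset.range n, lam j * a j x| ∂μ)
      atTop (nhds 0)

/-- Auxiliary: for any `f ∈ H^p_cw(X) ∩ L¹(X)` the integral of `f` vanishes, because every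
Coifman–Weiss atom has vanishing integral and the atomic series converges in `L¹`. -/
lemma hcw_integral_zero {X : Type*} [MeasurableSpace X] (d : X → X → ℝ) (μ : Measure X)
    (p : ℝ) (f : X → ℝ) (hf : Integrable f μ) (h : InHcw d μ p f) :
    ∫ x, f x ∂μ = 0 := by
  obtain ⟨lam, a, hatom, -, htend⟩ := h
  have hint : ∀ j, Integrable (fun x => lam j * a j x) μ := fun j => ((hatom j).1.const_mul _)
  have hP : ∀ n, Integrable (fun x => ∑ j ∈ Finset.range n, lam j * a j x) μ :=
    fun n => integrable_finset_sum _ fun j _ => hint j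
  have hPz : ∀ n, ∫ x, (∑ j ∈ Finset.range n, lam j * a j x) ∂μ = 0 := by
    intro n
    rw [integral_finset_sum _ fun j _ => hint j]
    refine Finset.sum_eq_zero fun j _ => ?_
    obtain ⟨hi, x₀, r₀, hr₀, hsupp, hbd, hz⟩ := hatom j
    rw [integral_const_mul, hz, mul_zero]
  have key : ∀ n, |∫ x, f x ∂μ| ≤ ∫ x, |f x - ∑ j ∈ Finset.range n, lam j * a j x| ∂μ := by
    intro n
    have h1 : ∫ x, f x ∂μ = ∫ x, (f x - ∑ j ∈ Finset.range n, lam j * a j x) ∂μ := by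
      rw [integral_sub hf (hP n), hPz n, sub_zero]
    rw [h1]
    simpa [Real.norm_eq_abs] using
      norm_integral_le_integral_norm (μ := μ)
        (fun x => f x - ∑ j ∈ Finset.range n, lam j * a j x)
  have h0 : |∫ x, f x ∂μ| ≤ 0 := ge_of_tendsto htend (Eventually.of_forall key)
  exact abs_eq_zero.mp (le_antisymm h0 (abs_nonneg _))

/-- Auxiliary rpow/pow commutation. -/
lemma rpow_pow_comm' {x : ℝ} (hx : 0 ≤ x) (y : ℝ) (j : ℕ) : (x ^ j) ^ y = (x ^ y) ^ j := by
  rw [← Real.rpow_natCast x j, ← Real.rpow_natCast (x ^ y) j, ← Real.rpow_mul hx,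
    ← Real.rpow_mul hx, mul_comm]

/-- Auxiliary: construction of the local atomic decomposition of a test function:
decompose along the level sets of `f` determined by the decay thresholds
`cc j = μ(B(x₀,2^j))⁻¹ 2^{-jγ}`; each piece is (a multiple of) a local `(p,∞)`-atom
supported in `B(x₀,2^{j+1})` (radius `> 1`, so no cancellation is required). -/
lemma inhp_aux {X : Type*} [MeasurableSpace X] (d : X → X → ℝ) (μ : Measure X) (x₀ : X)
    (p γ Cμ : ℝ) (hCμ : 1 ≤ Cμ) (hp0 : 0 < p) (hp1 : p ≤ 1) (hγ0 : 0 < γ)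
    (hγp : Real.log Cμ * (1 - p) < Real.log 2 * (γ * p))
    (hd_nonneg : ∀ x : X, 0 ≤ d x₀ x)
    (hball : ∀ r : ℝ, 0 < r → 0 < μ (qball d x₀ r) ∧ μ (qball d x₀ r) < ⊤)
    (hdouble : ∀ r : ℝ, 0 < r →
      μ (qball d x₀ (2 * r)) ≤ ENNReal.ofReal Cμ * μ (qball d x₀ r))
    (f : X → ℝ) (hfi : Integrable f μ)
    (hsize : ∀ x : X, |f x| ≤
        ((μ (qball d x₀ 1)).toReal + (μ (qball d x₀ (d x₀ x))).toReal)⁻¹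
          * (1 / (1 + d x₀ x)) ^ γ) :
    Inhp d μ p f := by
  classical
  have hCμ0 : (0:ℝ) < Cμ := by linarith
  have h2pos : ∀ j : ℕ, (0:ℝ) < 2 ^ j := fun j => pow_pos two_pos j
  set V : ℕ → ℝ := fun j => (μ (qball d x₀ ((2:ℝ) ^ j))).toReal with hVdef
  have hVfin : ∀ j : ℕ, μ (qball d x₀ ((2:ℝ) ^ j)) ≠ ⊤ := fun j => (hball _ (h2pos j)).2.ne
  have hVpos : ∀ j, 0 < V j := fun j =>
    ENNReal.toReal_pos (hball _ (h2pos j)).1.ne' (hVfin j)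
  have hqball_mono : ∀ r s : ℝ, r ≤ s → qball d x₀ r ⊆ qball d x₀ s :=
    fun r s h x hx => lt_of_lt_of_le hx h
  have hVmono : ∀ j k : ℕ, j ≤ k → V j ≤ V k := fun j k h =>
    ENNReal.toReal_mono (hVfin k)
      (measure_mono (hqball_mono _ _ (pow_le_pow_right₀ one_le_two h)))
  have hVd : ∀ j, V (j + 1) ≤ Cμ * V j := by
    intro j
    have h2 : (2:ℝ) ^ (j + 1) = 2 * 2 ^ j := by ring
    have hle := hdouble ((2:ℝ) ^ j) (h2pos j)
    have hfin : ENNReal.ofReal Cμ * μ (qball d x₀ ((2:ℝ) ^ j)) ≠ ⊤ :=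
      ENNReal.mul_ne_top ENNReal.ofReal_ne_top (hVfin j)
    have := ENNReal.toReal_mono hfin (h2 ▸ hle)
    rwa [ENNReal.toReal_mul, ENNReal.toReal_ofReal hCμ0.le] at this
  have hVgeom : ∀ j, V j ≤ Cμ ^ j * V 0 := by
    intro j
    induction j with
    | zero => simp
    | succ n ih =>
      calc V (n + 1) ≤ Cμ * V n := hVd n
        _ ≤ Cμ * (Cμ ^ n * V 0) := mul_le_mul_of_nonneg_left ih hCμ0.le
        _ = Cμ ^ (n + 1) * V 0 := by ring
  set q : ℝ := (2:ℝ) ^ (-γ) with hqdef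
  have hqpos : 0 < q := Real.rpow_pos_of_pos two_pos _
  have hq1 : q < 1 := Real.rpow_lt_one_of_one_lt_of_neg one_lt_two (neg_lt_zero.2 hγ0)
  set cc : ℕ → ℝ := fun j => (V j)⁻¹ * q ^ j with hccdef
  have hccpos : ∀ j, 0 < cc j := fun j => mul_pos (inv_pos.2 (hVpos j)) (pow_pos hqpos j)
  have hccanti : ∀ j k : ℕ, j ≤ k → cc k ≤ cc j := by
    intro j k h
    exact mul_le_mul (inv_anti₀ (hVpos j) (hVmono j k h))
      (pow_le_pow_of_le_one hqpos.le hq1.le h) (pow_nonneg hqpos.le k)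
      (inv_nonneg.2 (hVpos j).le)
  have hqinv : ∀ j : ℕ, (((2:ℝ) ^ j)⁻¹ : ℝ) ^ γ = q ^ j := by
    intro j
    rw [← inv_pow, rpow_pow_comm' (by norm_num : (0:ℝ) ≤ 2⁻¹) γ j,
      Real.inv_rpow (by norm_num : (0:ℝ) ≤ 2), ← Real.rpow_neg (by norm_num : (0:ℝ) ≤ 2)]
  -- the key decay estimates
  have hkey : ∀ (j : ℕ) (x : X), cc j < |f x| → d x₀ x < (2:ℝ) ^ j := by
    intro j x hlt
    by_contra hge
    push_neg at hge
    have ht0 : 0 < d x₀ x := lt_of_lt_of_le (h2pos j) hge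
    have hW : V j ≤ (μ (qball d x₀ (d x₀ x))).toReal :=
      ENNReal.toReal_mono (hball _ ht0).2.ne (measure_mono (hqball_mono _ _ hge))
    have hA : ((μ (qball d x₀ 1)).toReal + (μ (qball d x₀ (d x₀ x))).toReal)⁻¹ ≤ (V j)⁻¹ := by
      apply inv_anti₀ (hVpos j)
      have h1 : (0:ℝ) ≤ (μ (qball d x₀ 1)).toReal := ENNReal.toReal_nonneg
      linarith
    have hB : (1 / (1 + d x₀ x)) ^ γ ≤ q ^ j := by
      have hb1 : (1:ℝ) / (1 + d x₀ x) ≤ ((2:ℝ) ^ j)⁻¹ := by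
        rw [one_div]
        apply inv_anti₀ (h2pos j)
        linarith
      calc (1 / (1 + d x₀ x)) ^ γ ≤ (((2:ℝ) ^ j)⁻¹) ^ γ :=
            Real.rpow_le_rpow (by positivity) hb1 hγ0.le
        _ = q ^ j := hqinv j
    have hfle : |f x| ≤ (V j)⁻¹ * q ^ j :=
      le_trans (hsize x)
        (mul_le_mul hA hB (Real.rpow_nonneg (by positivity) γ) (inv_nonneg.2 (hVpos j).le))
    exact absurd hlt (not_lt.2 hfle)
  have hcc0 : ∀ x, |f x| ≤ cc 0 := by
    intro x
    have hV0eq : V 0 = (μ (qball d x₀ 1)).toReal := by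
      simp [hVdef]
    have hA : ((μ (qball d x₀ 1)).toReal + (μ (qball d x₀ (d x₀ x))).toReal)⁻¹ ≤ (V 0)⁻¹ := by
      apply inv_anti₀ (hVpos 0)
      rw [hV0eq]
      exact le_add_of_nonneg_right ENNReal.toReal_nonneg
    have hB : (1 / (1 + d x₀ x)) ^ γ ≤ 1 := by
      apply Real.rpow_le_one (div_nonneg zero_le_one (by linarith [hd_nonneg x])) _ hγ0.le
      rw [div_le_one (by linarith [hd_nonneg x])]
      linarith [hd_nonneg x]
    have : |f x| ≤ (V 0)⁻¹ * 1 :=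
      le_trans (hsize x)
        (mul_le_mul hA hB (Real.rpow_nonneg (div_nonneg zero_le_one (by linarith [hd_nonneg x])) γ)
          (inv_nonneg.2 (hVpos 0).le))
    simpa [hccdef] using this
  -- the measurable representative
  set g : X → ℝ := hfi.1.mk f with hgdef
  have hgsm : StronglyMeasurable g := hfi.1.stronglyMeasurable_mk
  have hgae : f =ᵐ[μ] g := hfi.1.ae_eq_mk
  have hgi : Integrable g μ := hfi.congr hgae
  set E : ℕ → Set X := fun j => {x | cc j < |g x|} with hEdef
  have hEmeas : ∀ n, MeasurableSet (E n) := fun n =>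
    measurableSet_lt measurable_const hgsm.measurable.abs
  have hEmono : ∀ j k : ℕ, j ≤ k → E j ⊆ E k :=
    fun j k h x hx => lt_of_le_of_lt (hccanti j k h) hx
  set A : ℕ → Set X := fun j => E (j + 1) \ E j with hAdef
  have hAmeas : ∀ j, MeasurableSet (A j) := fun j => (hEmeas (j + 1)).diff (hEmeas j)
  set lam : ℕ → ℝ := fun j => cc j * V (j + 1) ^ (1 / p) with hlamdef
  have hlampos : ∀ j, 0 < lam j := fun j =>
    mul_pos (hccpos j) (Real.rpow_pos_of_pos (hVpos (j + 1)) _)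
  set a : ℕ → X → ℝ := fun j x =>
    (lam j)⁻¹ * Set.indicator (A j ∩ qball d x₀ ((2:ℝ) ^ (j + 1))) g x with hadef
  -- a j is a.e. equal to a measurable function
  have haeq : ∀ j, (fun x => (lam j)⁻¹ * Set.indicator (A j) g x) =ᵐ[μ] a j := by
    intro j
    filter_upwards [hgae] with x hx
    by_cases hA : x ∈ A j
    · have h1 : cc (j + 1) < |g x| := hA.1
      rw [← hx] at h1
      have hqb : x ∈ qball d x₀ ((2:ℝ) ^ (j + 1)) := hkey (j + 1) x h1
      show (lam j)⁻¹ * Set.indicator (A j) g x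
          = (lam j)⁻¹ * Set.indicator (A j ∩ qball d x₀ ((2:ℝ) ^ (j + 1))) g x
      rw [Set.indicator_of_mem hA, Set.indicator_of_mem (Set.mem_inter hA hqb)]
    · show (lam j)⁻¹ * Set.indicator (A j) g x
          = (lam j)⁻¹ * Set.indicator (A j ∩ qball d x₀ ((2:ℝ) ^ (j + 1))) g x
      rw [Set.indicator_of_notMem hA, Set.indicator_of_notMem (fun h => hA h.1)]
  have hai : ∀ j, Integrable (a j) μ := fun j =>
    (((hgi.indicator (hAmeas j)).const_mul _)).congr (haeq j)
  refine ⟨lam, a, fun j => ?_, ?_, ?_⟩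
  · -- each `a j` is a local atom
    refine ⟨hai j, x₀, (2:ℝ) ^ (j + 1), h2pos (j + 1), ?_, ?_, ?_⟩
    · intro x hx
      have hx' : Set.indicator (A j ∩ qball d x₀ ((2:ℝ) ^ (j + 1))) g x ≠ 0 := by
        intro h0
        apply hx
        show (lam j)⁻¹ * Set.indicator (A j ∩ qball d x₀ ((2:ℝ) ^ (j + 1))) g x = 0
        rw [h0, mul_zero]
      exact (Set.mem_of_indicator_ne_zero hx').2
    · intro x
      show |(lam j)⁻¹ * Set.indicator (A j ∩ qball d x₀ ((2:ℝ) ^ (j + 1))) g x|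
          ≤ (μ (qball d x₀ ((2:ℝ) ^ (j + 1)))).toReal ^ (-(1 / p))
      rw [abs_mul, abs_inv, abs_of_pos (hlampos j)]
      by_cases hx : x ∈ A j ∩ qball d x₀ ((2:ℝ) ^ (j + 1))
      · rw [Set.indicator_of_mem hx]
        have hle : |g x| ≤ cc j := not_lt.1 hx.1.2
        have heq : (lam j)⁻¹ * cc j = (V (j + 1) ^ (1 / p))⁻¹ := by
          simp only [hlamdef]
          rw [mul_inv, mul_comm ((cc j)⁻¹), mul_assoc, inv_mul_cancel₀ (hccpos j).ne',
            mul_one]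
        calc (lam j)⁻¹ * |g x| ≤ (lam j)⁻¹ * cc j :=
              mul_le_mul_of_nonneg_left hle (inv_nonneg.2 (hlampos j).le)
          _ = (V (j + 1) ^ (1 / p))⁻¹ := heq
          _ = (μ (qball d x₀ ((2:ℝ) ^ (j + 1)))).toReal ^ (-(1 / p)) := by
              rw [Real.rpow_neg ENNReal.toReal_nonneg]
      · rw [Set.indicator_of_notMem hx]
        simp only [abs_zero, mul_zero]
        exact Real.rpow_nonneg ENNReal.toReal_nonneg _
    · intro hle1
      exfalso
      have h2 : (2:ℝ) ≤ 2 ^ (j + 1) := le_self_pow₀ one_le_two (Nat.succ_ne_zero j)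
      linarith
  · -- summability of `|lam j|^p`
    set r : ℝ := Cμ ^ (1 - p) * q ^ p with hrdef
    have hr0 : 0 ≤ r := mul_nonneg (Real.rpow_nonneg hCμ0.le _) (Real.rpow_nonneg hqpos.le _)
    have hr1 : r < 1 := by
      have e1 : Cμ ^ (1 - p) = Real.exp (Real.log Cμ * (1 - p)) := Real.rpow_def_of_pos hCμ0 _
      have e2 : q ^ p = Real.exp (Real.log 2 * (-γ * p)) := by
        have h1 : q ^ p = (2:ℝ) ^ (-γ * p) :=
          (Real.rpow_mul (by norm_num : (0:ℝ) ≤ 2) (-γ) p).symm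
        rw [h1, Real.rpow_def_of_pos two_pos]
      rw [hrdef, e1, e2, ← Real.exp_add]
      apply Real.exp_lt_one_iff.2
      nlinarith [hγp]
    have hbound : ∀ j, |lam j| ^ p ≤ (Cμ * V 0 ^ (1 - p)) * r ^ j := by
      intro j
      have h1 : |lam j| = lam j := abs_of_pos (hlampos j)
      have h2 : (V (j + 1) ^ (1 / p)) ^ p = V (j + 1) := by
        rw [← Real.rpow_mul (hVpos (j + 1)).le, one_div_mul_cancel hp0.ne', Real.rpow_one]
      have h3 : lam j ^ p = cc j ^ p * V (j + 1) := by
        simp only [hlamdef]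
        rw [Real.mul_rpow (hccpos j).le (Real.rpow_nonneg (hVpos (j + 1)).le _), h2]
      have h4 : cc j ^ p = ((V j) ^ p)⁻¹ * (q ^ p) ^ j := by
        simp only [hccdef]
        rw [Real.mul_rpow (inv_nonneg.2 (hVpos j).le) (pow_nonneg hqpos.le j),
          Real.inv_rpow (hVpos j).le, rpow_pow_comm' hqpos.le p j]
      have h5 : ((V j) ^ p)⁻¹ * V j = V j ^ (1 - p) := by
        rw [Real.rpow_sub (hVpos j), Real.rpow_one, div_eq_mul_inv]
        exact mul_comm _ _
      have h6 : V j ^ (1 - p) ≤ (Cμ ^ (1 - p)) ^ j * V 0 ^ (1 - p) := by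
        calc V j ^ (1 - p) ≤ (Cμ ^ j * V 0) ^ (1 - p) :=
              Real.rpow_le_rpow (hVpos j).le (hVgeom j) (by linarith)
          _ = (Cμ ^ j) ^ (1 - p) * V 0 ^ (1 - p) :=
              Real.mul_rpow (pow_nonneg hCμ0.le j) (hVpos 0).le
          _ = (Cμ ^ (1 - p)) ^ j * V 0 ^ (1 - p) := by rw [rpow_pow_comm' hCμ0.le]
      calc |lam j| ^ p = ((V j) ^ p)⁻¹ * (q ^ p) ^ j * V (j + 1) := by
            rw [h1, h3, h4]
        _ ≤ ((V j) ^ p)⁻¹ * (q ^ p) ^ j * (Cμ * V j) := by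
            apply mul_le_mul_of_nonneg_left (hVd j)
            positivity
        _ = Cμ * (((V j) ^ p)⁻¹ * V j) * (q ^ p) ^ j := by ring
        _ = Cμ * V j ^ (1 - p) * (q ^ p) ^ j := by rw [h5]
        _ ≤ Cμ * ((Cμ ^ (1 - p)) ^ j * V 0 ^ (1 - p)) * (q ^ p) ^ j := by
            apply mul_le_mul_of_nonneg_right _ (pow_nonneg (Real.rpow_nonneg hqpos.le p) j)
            exact mul_le_mul_of_nonneg_left h6 hCμ0.le
        _ = (Cμ * V 0 ^ (1 - p)) * r ^ j := by
            rw [hrdef, mul_pow]; ring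
    refine Summable.of_nonneg_of_le (fun j => Real.rpow_nonneg (abs_nonneg _) _) hbound ?_
    exact (summable_geometric_of_lt_one hr0 hr1).mul_left _
  · -- L¹-convergence of the partial sums
    have hsum_eq : ∀ᵐ x ∂μ, ∀ n,
        (∑ j ∈ Finset.range n, lam j * a j x) = Set.indicator (E n) g x := by
      filter_upwards [hgae] with x hx
      intro n
      induction n with
      | zero =>
        have hnot : x ∉ E 0 := by
          intro hmem
          have h1 : cc 0 < |g x| := hmem
          rw [← hx] at h1
          exact absurd h1 (not_lt.2 (hcc0 x))
        simp [Set.indicator_of_notMem hnot]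
      | succ n ih =>
        rw [Finset.sum_range_succ, ih]
        have ha : lam n * a n x
            = Set.indicator (A n ∩ qball d x₀ ((2:ℝ) ^ (n + 1))) g x := by
          show lam n * ((lam n)⁻¹ * _) = _
          rw [← mul_assoc, mul_inv_cancel₀ (hlampos n).ne', one_mul]
        rw [ha]
        by_cases h1 : x ∈ E (n + 1)
        · have hqb : x ∈ qball d x₀ ((2:ℝ) ^ (n + 1)) := by
            have h2 : cc (n + 1) < |g x| := h1
            rw [← hx] at h2
            exact hkey (n + 1) x h2
          by_cases h2 : x ∈ E n
          · have hAn : x ∉ A n ∩ qball d x₀ ((2:ℝ) ^ (n + 1)) := fun hA => hA.1.2 h2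
            rw [Set.indicator_of_mem h2, Set.indicator_of_notMem hAn,
              Set.indicator_of_mem h1, add_zero]
          · have hAn : x ∈ A n ∩ qball d x₀ ((2:ℝ) ^ (n + 1)) := ⟨⟨h1, h2⟩, hqb⟩
            rw [Set.indicator_of_notMem h2, Set.indicator_of_mem hAn,
              Set.indicator_of_mem h1, zero_add]
        · have h2 : x ∉ E n := fun h => h1 (hEmono n (n + 1) (Nat.le_succ n) h)
          have hAn : x ∉ A n ∩ qball d x₀ ((2:ℝ) ^ (n + 1)) := fun hA => h1 hA.1.1
          rw [Set.indicator_of_notMem h2, Set.indicator_of_notMem hAn,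
            Set.indicator_of_notMem h1, add_zero]
    have hP_eq : ∀ n, ∫ x, |f x - ∑ j ∈ Finset.range n, lam j * a j x| ∂μ
        = ∫ x, |f x - Set.indicator (E n) g x| ∂μ := by
      intro n
      apply integral_congr_ae
      filter_upwards [hsum_eq] with x hx
      rw [hx n]
    have hccto : Tendsto cc atTop (nhds 0) := by
      have h1 : ∀ j, cc j ≤ (V 0)⁻¹ * q ^ j := fun j =>
        mul_le_mul_of_nonneg_right (inv_anti₀ (hVpos 0) (hVmono 0 j (Nat.zero_le j)))
          (pow_nonneg hqpos.le j)
      have h2 : Tendsto (fun j : ℕ => (V 0)⁻¹ * q ^ j) atTop (nhds 0) := by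
        simpa using (tendsto_pow_atTop_nhds_zero_of_lt_one hqpos.le hq1).const_mul ((V 0)⁻¹)
      exact squeeze_zero (fun j => (hccpos j).le) h1 h2
    have hind_abs : ∀ (s : Set X) (x : X), |Set.indicator s g x| ≤ |g x| := by
      intro s x
      by_cases h : x ∈ s
      · rw [Set.indicator_of_mem h]
      · rw [Set.indicator_of_notMem h, abs_zero]; exact abs_nonneg _
    have hDCT : Tendsto (fun n => ∫ x, |f x - Set.indicator (E n) g x| ∂μ) atTop (nhds 0) := by
      have hmain := MeasureTheory.tendsto_integral_of_dominated_convergence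
        (F := fun n x => |f x - Set.indicator (E n) g x|) (f := fun _ => (0:ℝ))
        (bound := fun x => |f x| + |g x|)
        (fun n => by
          simpa [Real.norm_eq_abs] using
            (hfi.1.sub ((hgsm.indicator (hEmeas n)).aestronglyMeasurable)).norm)
        (hfi.abs.add hgi.abs)
        (fun n => Eventually.of_forall fun x => by
          simp only [Real.norm_eq_abs, abs_abs]
          calc |f x - Set.indicator (E n) g x| ≤ |f x| + |Set.indicator (E n) g x| := by
                rw [sub_eq_add_neg]
                exact (abs_add_le _ _).trans (by rw [abs_neg])
            _ ≤ |f x| + |g x| := by linarith [hind_abs (E n) x])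
        ?_
      · simpa using hmain
      · filter_upwards [hgae] with x hx
        by_cases hg0 : g x = 0
        · have hzero : ∀ n, |f x - Set.indicator (E n) g x| = 0 := by
            intro n
            have hi0 : Set.indicator (E n) g x = 0 := by
              by_cases h : x ∈ E n
              · rw [Set.indicator_of_mem h, hg0]
              · exact Set.indicator_of_notMem h g
            rw [hi0, sub_zero, hx, hg0, abs_zero]
          simpa [hzero] using tendsto_const_nhds (f := atTop) (x := (0:ℝ))
        · have h2 : ∀ᶠ n in atTop, cc n < |g x| :=
            hccto.eventually_lt_const (abs_pos.2 hg0)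
          have h1 : ∀ᶠ n in atTop, |f x - Set.indicator (E n) g x| = 0 := by
            filter_upwards [h2] with n hn
            have hmem : x ∈ E n := hn
            rw [Set.indicator_of_mem hmem, hx, sub_self, abs_zero]
          exact Tendsto.congr' (by filter_upwards [h1] with n hn; exact hn.symm)
            tendsto_const_nhds
    exact hDCT.congr fun n => (hP_eq n).symm

/-- On a space of homogeneous type with `μ(X) = ∞`: any `f ∈ H^p_cw(X) ∩ L²(X)`
has `∫ f dμ = 0`; consequently any test function `f ∈ G(β,γ)` with `∫ f dμ ≠ 0`
belongs to `h^p(X)` but not to `H^p_cw(X)`, so that `H^p_cw(X) ⊊ h^p(X)`. -/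
theorem stmt19 {X : Type*} [MeasurableSpace X] (d : X → X → ℝ) (μ : Measure X)
    (A0 : ℝ) (hA0 : 1 ≤ A0)
    (hd_eq : ∀ x y : X, d x y = 0 ↔ x = y)
    (hd_symm : ∀ x y : X, d x y = d y x)
    (hd_nonneg : ∀ x y : X, 0 ≤ d x y)
    (hd_tri : ∀ x y z : X, d x y ≤ A0 * (d x z + d z y))
    (hball : ∀ (x : X) (r : ℝ), 0 < r → 0 < μ (qball d x r) ∧ μ (qball d x r) < ⊤)
    (hXinf : μ Set.univ = ⊤)
    (Cμ : ℝ) (hCμ : 1 ≤ Cμ)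
    (hdouble : ∀ (x : X) (r : ℝ), 0 < r →
      μ (qball d x (2 * r)) ≤ ENNReal.ofReal Cμ * μ (qball d x r))
    (η : ℝ) (hη : 0 < η ∧ η < 1)
    (p : ℝ) (hp0 : Real.logb 2 Cμ / (Real.logb 2 Cμ + η) < p) (hp1 : p ≤ 1)
    (β γ : ℝ) (hβ : Real.logb 2 Cμ * (1 / p - 1) < β ∧ β < η)
    (hγ : Real.logb 2 Cμ * (1 / p - 1) < γ ∧ γ < η) :
    (∀ f : X → ℝ, MemLp f 2 μ → Integrable f μ → InHcw d μ p f →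
      ∫ x, f x ∂μ = 0) ∧
    (∀ (x₀ : X) (f : X → ℝ), Integrable f μ →
      -- the size condition of `G(x₀,1,β,γ)` with constant `1`:
      (∀ x : X, |f x| ≤
        ((μ (qball d x₀ 1)).toReal + (μ (qball d x₀ (d x₀ x))).toReal)⁻¹
          * (1 / (1 + d x₀ x)) ^ γ) →
      -- the regularity condition of `G(x₀,1,β,γ)` with constant `1`:
      (∀ x y : X, d x y ≤ (2 * A0)⁻¹ * (1 + d x₀ x) →
        |f x - f y| ≤ (d x y / (1 + d x₀ x)) ^ β
          * ((μ (qball d x₀ 1)).toReal + (μ (qball d x₀ (d x₀ x))).toReal)⁻¹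
          * (1 / (1 + d x₀ x)) ^ γ) →
      (∫ x, f x ∂μ) ≠ 0 →
      Inhp d μ p f ∧ ¬ InHcw d μ p f) := by
  have hω : 0 ≤ Real.logb 2 Cμ := Real.logb_nonneg one_lt_two hCμ
  have hp0' : 0 < p :=
    lt_of_le_of_lt (div_nonneg hω (by linarith [hη.1])) hp0
  have hγ0 : 0 < γ := by
    refine lt_of_le_of_lt (mul_nonneg hω ?_) hγ.1
    have h1 : (1:ℝ) ≤ 1 / p := by
      rw [le_div_iff₀ hp0']
      linarith
    linarith
  have hγp : Real.log Cμ * (1 - p) < Real.log 2 * (γ * p) := by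
    have hlog2 : 0 < Real.log 2 := Real.log_pos one_lt_two
    have h1 : Real.logb 2 Cμ * (1 / p - 1) * (Real.log 2 * p) < γ * (Real.log 2 * p) :=
      mul_lt_mul_of_pos_right hγ.1 (by positivity)
    have h2 : Real.logb 2 Cμ * (1 / p - 1) * (Real.log 2 * p) = Real.log Cμ * (1 - p) := by
      rw [Real.logb]
      field_simp
    have h3 : γ * (Real.log 2 * p) = Real.log 2 * (γ * p) := by ring
    linarith
  constructor
  · intro f _ hfi hcw
    exact hcw_integral_zero d μ p f hfi hcw
  · intro x₀ f hfi hsize _ hne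
    refine ⟨?_, fun hcw => hne (hcw_integral_zero d μ p f hfi hcw)⟩
    exact inhp_aux d μ x₀ p γ Cμ hCμ hp0' hp1 hγ0 hγp (fun x => hd_nonneg x₀ x)
      (fun r hr => hball x₀ r hr) (fun r hr => hdouble x₀ r hr) f hfi hsize
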